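/- Let 𝒳 be a measurable space, H a real Hilbert space, and φ : 𝒳 → H a strongly measurable map satisfying 0 ≤ ⟨φ(x), φ(y)⟩ ≤ 1 for all x, y ∈ 𝒳. Then for any two probability measures P, Q on 𝒳, ‖∫ φ dP − ∫ φ dQ‖ ≤ √2 · TV(P,Q), where TV(P,Q) = sup over measurable sets A of |P(A) − Q(A)| is the total variation distance. -/

import Mathlib

open MeasureTheory
open scoped RealInnerProductSpace

/-- For a feature map `φ` with `0 ≤ ⟪φ x, φ y⟫ ≤ 1`, the distance between the mean
embeddings of two probability measures is at most `√2` times the total variation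
distance `sup_A |P(A) − Q(A)|`. -/
theorem mean_embedding_dist_le_tv
    {𝒳 : Type*} [MeasurableSpace 𝒳]
    {H : Type*} [NormedAddCommGroup H] [InnerProductSpace ℝ H] [CompleteSpace H]
    (φ : 𝒳 → H) (hφ : StronglyMeasurable φ)
    (hK0 : ∀ x y : 𝒳, 0 ≤ ⟪φ x, φ y⟫)
    (hK1 : ∀ x y : 𝒳, ⟪φ x, φ y⟫ ≤ 1)
    (P Q : Measure 𝒳) [IsProbabilityMeasure P] [IsProbabilityMeasure Q] :
    ‖(∫ x, φ x ∂P) - ∫ x, φ x ∂Q‖ ≤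
      Real.sqrt 2 *
        sSup {r : ℝ | ∃ A : Set 𝒳, MeasurableSet A ∧
          r = |(P A).toReal - (Q A).toReal|} := by
  classical
  set TVset : Set ℝ := {r : ℝ | ∃ A : Set 𝒳, MeasurableSet A ∧
      r = |(P A).toReal - (Q A).toReal|} with hTVset
  set T : ℝ := sSup TVset with hT
  -- boundedness of the set
  have hbdd : BddAbove TVset := by
    refine ⟨1, fun r hr => ?_⟩
    obtain ⟨A, hA, rfl⟩ := hr
    have h1 : (P A).toReal ≤ 1 := by
      have := prob_le_one (μ := P) (s := A)
      simpa using ENNReal.toReal_le_of_le_ofReal zero_le_one (by simpa using this)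
    have h2 : (Q A).toReal ≤ 1 := by
      have := prob_le_one (μ := Q) (s := A)
      simpa using ENNReal.toReal_le_of_le_ofReal zero_le_one (by simpa using this)
    have h3 : 0 ≤ (P A).toReal := ENNReal.toReal_nonneg
    have h4 : 0 ≤ (Q A).toReal := ENNReal.toReal_nonneg
    rw [abs_le]; constructor <;> linarith
  have hmem : ∀ A : Set 𝒳, MeasurableSet A → |(P A).toReal - (Q A).toReal| ≤ T :=
    fun A hA => le_csSup hbdd ⟨A, hA, rfl⟩
  have hT0 : 0 ≤ T := by
    have := hmem ∅ MeasurableSet.empty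
    simpa using le_trans (abs_nonneg _) this
  -- φ is bounded by 1
  have hb : ∀ x, ‖φ x‖ ≤ 1 := by
    intro x
    have h := hK1 x x
    rw [real_inner_self_eq_norm_sq] at h
    nlinarith [norm_nonneg (φ x)]
  have hint : ∀ (μ : Measure 𝒳) [IsFiniteMeasure μ], Integrable φ μ := by
    intro μ _
    exact (integrable_const (1 : ℝ)).mono' hφ.aestronglyMeasurable
      (Filter.Eventually.of_forall fun x => by simpa using hb x)
  -- Hahn decomposition
  obtain ⟨S, hS, h1, h2⟩ := hahn_decomposition (μ := P) (ν := Q)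
  have hQP : Q.restrict S ≤ P.restrict S := by
    refine Measure.le_iff.2 fun t ht => ?_
    rw [Measure.restrict_apply ht, Measure.restrict_apply ht]
    exact h1 _ (ht.inter hS) Set.inter_subset_right
  have hPQ : P.restrict Sᶜ ≤ Q.restrict Sᶜ := by
    refine Measure.le_iff.2 fun t ht => ?_
    rw [Measure.restrict_apply ht, Measure.restrict_apply ht]
    exact h2 _ (ht.inter hS.compl) Set.inter_subset_right
  set μ₁ : Measure 𝒳 := P.restrict S - Q.restrict S with hμ₁
  set μ₂ : Measure 𝒳 := Q.restrict Sᶜ - P.restrict Sᶜ with hμ₂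
  haveI : IsFiniteMeasure μ₁ := Measure.isFiniteMeasure_sub
  haveI : IsFiniteMeasure μ₂ := Measure.isFiniteMeasure_sub
  have hdecS : μ₁ + Q.restrict S = P.restrict S := Measure.sub_add_cancel_of_le hQP
  have hdecSc : μ₂ + P.restrict Sᶜ = Q.restrict Sᶜ := Measure.sub_add_cancel_of_le hPQ
  set u : H := ∫ x, φ x ∂μ₁ with hu
  set v : H := ∫ x, φ x ∂μ₂ with hv
  -- the difference of mean embeddings is u - v
  have key : (∫ x, φ x ∂P) - ∫ x, φ x ∂Q = u - v := by
    have hP : (∫ x, φ x ∂P) = (∫ x, φ x ∂(P.restrict S)) + ∫ x, φ x ∂(P.restrict Sᶜ) :=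
      (integral_add_compl hS (hint P)).symm
    have hQ : (∫ x, φ x ∂Q) = (∫ x, φ x ∂(Q.restrict S)) + ∫ x, φ x ∂(Q.restrict Sᶜ) :=
      (integral_add_compl hS (hint Q)).symm
    have hPS : (∫ x, φ x ∂(P.restrict S)) = u + ∫ x, φ x ∂(Q.restrict S) := by
      rw [← hdecS, integral_add_measure (hint μ₁) (hint (Q.restrict S))]
    have hQSc : (∫ x, φ x ∂(Q.restrict Sᶜ)) = v + ∫ x, φ x ∂(P.restrict Sᶜ) := by
      rw [← hdecSc, integral_add_measure (hint μ₂) (hint (P.restrict Sᶜ))]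
    rw [hP, hQ, hPS, hQSc]; abel
  -- inner product nonnegativity
  have hvφ : ∀ x, 0 ≤ ⟪φ x, v⟫ := by
    intro x
    rw [hv, ← integral_inner (hint μ₂) (φ x)]
    exact integral_nonneg fun y => hK0 x y
  have hinner : 0 ≤ ⟪u, v⟫ := by
    rw [real_inner_comm, hu, ← integral_inner (hint μ₁) v]
    exact integral_nonneg fun x => by rw [real_inner_comm]; exact hvφ x
  -- norm bounds
  have hmass : ∀ (μ : Measure 𝒳) [IsFiniteMeasure μ],
      ‖∫ x, φ x ∂μ‖ ≤ (μ Set.univ).toReal := by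
    intro μ _
    calc ‖∫ x, φ x ∂μ‖ ≤ ∫ x, ‖φ x‖ ∂μ := norm_integral_le_integral_norm _
      _ ≤ ∫ _, (1 : ℝ) ∂μ := integral_mono (hint μ).norm (integrable_const 1) hb
      _ = (μ Set.univ).toReal := by simp; rfl
  have hμ₁univ : (μ₁ Set.univ).toReal = (P S).toReal - (Q S).toReal := by
    rw [hμ₁, Measure.sub_apply MeasurableSet.univ hQP]
    rw [Measure.restrict_apply_univ, Measure.restrict_apply_univ]
    exact ENNReal.toReal_sub_of_le (h1 S hS subset_rfl) (measure_ne_top P S)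
  have hμ₂univ : (μ₂ Set.univ).toReal = (Q Sᶜ).toReal - (P Sᶜ).toReal := by
    rw [hμ₂, Measure.sub_apply MeasurableSet.univ hPQ]
    rw [Measure.restrict_apply_univ, Measure.restrict_apply_univ]
    exact ENNReal.toReal_sub_of_le (h2 Sᶜ hS.compl subset_rfl) (measure_ne_top Q Sᶜ)
  have hu_le : ‖u‖ ≤ T := by
    refine le_trans (hmass μ₁) ?_
    rw [hμ₁univ]
    exact le_trans (le_abs_self _) (hmem S hS)
  have hv_le : ‖v‖ ≤ T := by
    refine le_trans (hmass μ₂) ?_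
    rw [hμ₂univ]
    have := hmem Sᶜ hS.compl
    rw [abs_sub_comm] at this
    exact le_trans (le_abs_self _) this
  -- conclude
  rw [key]
  have hsq : ‖u - v‖ ^ 2 ≤ 2 * T ^ 2 := by
    have := norm_sub_sq_real u v
    nlinarith [norm_nonneg u, norm_nonneg v]
  nlinarith [Real.sq_sqrt (by norm_num : (0:ℝ) ≤ 2), Real.sqrt_nonneg 2,
    norm_nonneg (u - v), mul_nonneg (Real.sqrt_nonneg 2) hT0]
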